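/- Let G ≤ Diff̂(ℂⁿ,0) be a subgroup containing two dicritic diffeomorphisms tangent to the identity with different orders. Then G is not solvable. -/

import Mathlib

noncomputable section

namespace FormalGroups

/-- Formal power series in `n` complex variables: `ℂ[[z₁,…,zₙ]]`. -/
abbrev FPS (n : ℕ) := MvPowerSeries (Fin n) ℂ

/-- Formal vector fields on `(ℂⁿ,0)`: derivations of `ℂ[[z₁,…,zₙ]]`. -/
abbrev FVF (n : ℕ) := Derivation ℂ (FPS n) (FPS n)

/-- The group of formal diffeomorphisms of `(ℂⁿ,0)`, encoded (isomorphically,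
via the pullback action on power series) as the opposite of the group of
`ℂ`-algebra automorphisms of `ℂ[[z₁,…,zₙ]]`.  For `f : FDiff n`, `f.unop` is
the pullback `h ↦ h ∘ f`; multiplication `f * g` corresponds to the
composition `f ∘ g` of formal diffeomorphisms. -/
abbrev FDiff (n : ℕ) := (FPS n ≃ₐ[ℂ] FPS n)ᵐᵒᵖ

/-- The coordinate power series `zᵢ`. -/
def Z {n : ℕ} (i : Fin n) : FPS n := MvPowerSeries.X i

/-- The `i`-th component power series `f̂ᵢ` of a formal diffeomorphism. -/
def comp {n : ℕ} (f : FDiff n) (i : Fin n) : FPS n := f.unop (Z i)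

/-- Total degree of a monomial exponent. -/
def deg {n : ℕ} (d : Fin n →₀ ℕ) : ℕ := d.sum fun _ m => m

/-- A formal vector field belongs to `X̂(ℂⁿ,0)`: its coefficients vanish at `0`. -/
def VanishesAtZero {n : ℕ} (X : FVF n) : Prop :=
  ∀ i, MvPowerSeries.constantCoeff (σ := Fin n) (R := ℂ) (X (Z i)) = 0

/-- `f` is tangent to the identity: `f(z) = z + (order ≥ 2)`. -/
def TangentToId {n : ℕ} (f : FDiff n) : Prop :=
  (∀ i, MvPowerSeries.constantCoeff (σ := Fin n) (R := ℂ) (comp f i) = 0) ∧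
  ∀ i j, MvPowerSeries.coeff (R := ℂ) (Finsupp.single j 1) (comp f i) = if j = i then 1 else 0

/-- `f = exp (t X)`, expressed coefficientwise: `f̂ᵢ = Σ_j (tʲ/j!) X̂ʲ(zᵢ)`. -/
def IsExpT {n : ℕ} (f : FDiff n) (t : ℂ) (X : FVF n) : Prop :=
  ∀ i d, MvPowerSeries.coeff (R := ℂ) d (comp f i) =
    ∑' j : ℕ, (t ^ j / (Nat.factorial j : ℂ)) * MvPowerSeries.coeff (R := ℂ) d ((⇑X)^[j] (Z i))

/-- `f = exp X`. -/
def IsExp {n : ℕ} (f : FDiff n) (X : FVF n) : Prop := IsExpT f 1 X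

/-- The vector field `X` is invariant by the formal diffeomorphism `f`
(`f_* X = X`), i.e. `X` commutes with the pullback of `f`. -/
def InvariantBy {n : ℕ} (f : FDiff n) (X : FVF n) : Prop :=
  ∀ h, X (f.unop h) = f.unop (X h)

/-- `f_* X = c • X`  (projective invariance, with factor `c`). -/
def ProjInvariantBy {n : ℕ} (f : FDiff n) (X : FVF n) (c : ℂ) : Prop :=
  ∀ h, X (f.unop h) = c • f.unop (X h)

/-- The two vector fields commute: `[X,Y] = 0`. -/
def CommuteVF {n : ℕ} (X Y : FVF n) : Prop := ∀ h, X (Y h) = Y (X h)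

/-- All terms of the power series have degree at least `m`. -/
def OrderGE {n : ℕ} (F : FPS n) (m : ℕ) : Prop :=
  ∀ d, deg d < m → MvPowerSeries.coeff (R := ℂ) d F = 0

/-- The vector field vanishes to order at least `m` at the origin. -/
def VFOrderGE {n : ℕ} (X : FVF n) (m : ℕ) : Prop := ∀ i, OrderGE (X (Z i)) m

/-- `f` is tangent to the identity with order (exactly) `k`:
`f(z) = z + f_{k+1}(z) + ⋯` with `f_{k+1} ≠ 0`. -/
def TangentOrder {n : ℕ} (f : FDiff n) (k : ℕ) : Prop :=
  1 ≤ k ∧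
  (∀ i d, deg d ≤ k → MvPowerSeries.coeff (R := ℂ) d (comp f i) = MvPowerSeries.coeff (R := ℂ) d (Z i)) ∧
  ∃ i d, deg d = k + 1 ∧ MvPowerSeries.coeff (R := ℂ) d (comp f i) ≠ 0

/-- A dicritic diffeomorphism of order `k`: `f(z) = z + p(z)·z + (order ≥ k+2)`,
with `p ≠ 0` homogeneous of degree `k`. -/
def IsDicriticDiffeo {n : ℕ} (f : FDiff n) (k : ℕ) : Prop :=
  1 ≤ k ∧
  (∀ i d, deg d ≤ k → MvPowerSeries.coeff (R := ℂ) d (comp f i) = MvPowerSeries.coeff (R := ℂ) d (Z i)) ∧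
  ∃ p : MvPolynomial (Fin n) ℂ, p.IsHomogeneous k ∧ p ≠ 0 ∧
    ∀ i d, deg d = k + 1 →
      MvPowerSeries.coeff (R := ℂ) d (comp f i) = MvPowerSeries.coeff (R := ℂ) d ((p : FPS n) * Z i)

/-- A dicritic vector field of index `k` (order `k+1`):
`X = p(z)·R⃗ + (order ≥ k+2)` with `p ≠ 0` homogeneous of degree `k`,
where `R⃗ = Σ zᵢ ∂/∂zᵢ` is the radial vector field. -/
def IsDicriticVF {n : ℕ} (X : FVF n) (k : ℕ) : Prop :=
  1 ≤ k ∧ VFOrderGE X (k + 1) ∧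
  ∃ p : MvPolynomial (Fin n) ℂ, p.IsHomogeneous k ∧ p ≠ 0 ∧
    ∀ i d, deg d = k + 1 →
      MvPowerSeries.coeff (R := ℂ) d (X (Z i)) = MvPowerSeries.coeff (R := ℂ) d ((p : FPS n) * Z i)

/-- A regular dicritic vector field of index `k`: dicritic, and for the
homogeneous parts `pᵢ = q i` of degree `k+2` there are indices `i₀, j₀` with
`p` and `z_{j₀} q_{i₀} − z_{i₀} q_{j₀}` coprime. -/
def IsRegDicriticVF {n : ℕ} (X : FVF n) (k : ℕ) : Prop :=
  1 ≤ k ∧ VFOrderGE X (k + 1) ∧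
  ∃ (p : MvPolynomial (Fin n) ℂ) (q : Fin n → MvPolynomial (Fin n) ℂ),
    p.IsHomogeneous k ∧ p ≠ 0 ∧
    (∀ i d, deg d = k + 1 →
      MvPowerSeries.coeff (R := ℂ) d (X (Z i)) = MvPowerSeries.coeff (R := ℂ) d ((p : FPS n) * Z i)) ∧
    (∀ i, (q i).IsHomogeneous (k + 2)) ∧
    (∀ i d, deg d = k + 2 →
      MvPowerSeries.coeff (R := ℂ) d (X (Z i)) = MvPolynomial.coeff d (q i)) ∧
    ∃ i₀ j₀ : Fin n,
      IsRelPrime p (MvPolynomial.X j₀ * q i₀ - MvPolynomial.X i₀ * q j₀)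

/-- A regular dicritic diffeomorphism: its infinitesimal generator
`log f` is a regular dicritic vector field. -/
def IsRegDicriticDiffeo {n : ℕ} (f : FDiff n) (k : ℕ) : Prop :=
  ∃ X : FVF n, IsRegDicriticVF X k ∧ IsExp f X

/-- The derivative (linear part) `Df(0)` of `f` at `0`, as a matrix. -/
def Dmat {n : ℕ} (f : FDiff n) : Matrix (Fin n) (Fin n) ℂ :=
  Matrix.of fun i j => MvPowerSeries.coeff (R := ℂ) (Finsupp.single j 1) (comp f i)

/-- `L` is the linear diffeomorphism `z ↦ M z`. -/
def IsLinearWith {n : ℕ} (L : FDiff n) (M : Matrix (Fin n) (Fin n) ℂ) : Prop :=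
  ∀ i, comp L i = ∑ j, M i j • Z j

/-- Formal partial derivative `∂/∂zᵢ` on `ℂ[[z₁,…,zₙ]]`. -/
def pd {n : ℕ} (i : Fin n) (F : FPS n) : FPS n :=
  fun d => ((d i : ℂ) + 1) * MvPowerSeries.coeff (R := ℂ) (d + Finsupp.single i 1) F

/-- A formal meromorphic one-form `Σⱼ (Aⱼ/C) dzⱼ`, presented with a common
denominator `C ≠ 0` (its coefficients are elements `Aⱼ/C` of the fraction
field `K̂ₙ` of `ℂ[[z₁,…,zₙ]]`). -/
structure MeroForm (n : ℕ) where
  A : Fin n → FPS n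
  C : FPS n
  hC : C ≠ 0

/-- The one-form is closed (`dω = 0`), with denominators cleared. -/
def FormClosed {n : ℕ} (ω : MeroForm n) : Prop :=
  ∀ i j, pd i (ω.A j) * ω.C - ω.A j * pd i ω.C = pd j (ω.A i) * ω.C - ω.A i * pd j ω.C

/-- `g*ω = ω` (invariance of the one-form under pullback), denominators cleared. -/
def FormInvariantBy {n : ℕ} (g : FDiff n) (ω : MeroForm n) : Prop :=
  ∀ j, (∑ i, g.unop (ω.A i) * pd j (comp g i)) * ω.C = ω.A j * g.unop ω.C

/-- `g*ω = a ω₁ + b ω₂`, denominators cleared. -/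
def FormPullbackComb {n : ℕ} (g : FDiff n) (ω ω₁ ω₂ : MeroForm n) (a b : ℂ) : Prop :=
  ∀ j, (∑ i, g.unop (ω.A i) * pd j (comp g i)) * (ω₁.C * ω₂.C)
    = (a • (ω₁.A j * ω₂.C) + b • (ω₂.A j * ω₁.C)) * g.unop ω.C

/-- `ω₁, ω₂` are `ℂ`-linearly independent as meromorphic one-forms. -/
def FormsIndepC {n : ℕ} (ω₁ ω₂ : MeroForm n) : Prop :=
  ∀ a b : ℂ, (∀ j, a • (ω₁.A j * ω₂.C) + b • (ω₂.A j * ω₁.C) = 0) → a = 0 ∧ b = 0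

/-- A formal curve: a nonzero non-invertible formal series. -/
def IsFormalCurve (φ : FPS 2) : Prop :=
  φ ≠ 0 ∧ MvPowerSeries.constantCoeff (σ := Fin 2) (R := ℂ) φ = 0

/-- The formal curve `φ` is invariant by `f`: `φ ∘ f = u·φ` for a unit `u`. -/
def CurveInvariantBy (f : FDiff 2) (φ : FPS 2) : Prop :=
  ∃ u : FPS 2, IsUnit u ∧ f.unop φ = u * φ

/-- Linear coefficient of `φ` in the variable `zᵢ` (the differential `Dφ(0)`). -/
def lc (i : Fin 2) (φ : FPS 2) : ℂ := MvPowerSeries.coeff (R := ℂ) (Finsupp.single i 1) φ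

/-- The formal curves `φ, ψ` are transverse: each tangent space (kernel of the
differential at `0`) is one-dimensional and together they span `ℂ²`;
equivalently the two differentials at `0` are linearly independent. -/
def Transverse (φ ψ : FPS 2) : Prop :=
  lc 0 φ * lc 1 ψ - lc 1 φ * lc 0 ψ ≠ 0

/-- The formal power series is convergent (defines a germ of holomorphic
function): its coefficients grow at most geometrically. -/
def IsConvergent {n : ℕ} (F : FPS n) : Prop :=
  ∃ M A : ℝ, ∀ d, ‖MvPowerSeries.coeff (R := ℂ) d F‖ ≤ M * A ^ deg d

/-- `g* X = (p/q)·X`, denominators cleared: the pullback `g* X = (g⁻¹)_* X`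
of the vector field `X` equals the rational multiple `(p/q) X`. -/
def PullbackEqRat {n : ℕ} (g : FDiff n) (X : FVF n) (p q : FPS n) : Prop :=
  ∀ h, q * g.unop (X (g.unop.symm h)) = p * X h

/-- `g* X = s X₁ + t X₂` (pullback of `X` is a constant combination). -/
def PullbackEqComb {n : ℕ} (g : FDiff n) (X X₁ X₂ : FVF n) (s t : ℂ) : Prop :=
  ∀ h, g.unop (X (g.unop.symm h)) = s • X₁ h + t • X₂ h

end FormalGroups

namespace FormalGroups
open MvPowerSeries
open scoped commutatorElement

section AuxSolvable
variable {n : ℕ}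

lemma deg_eq_degree (d : Fin n →₀ ℕ) : deg d = d.degree := rfl

lemma deg_add (d e : Fin n →₀ ℕ) : deg (d + e) = deg d + deg e := by
  classical
  exact Finsupp.sum_add_index' (fun _ => rfl) (fun _ _ _ => rfl)

lemma deg_zero : deg (0 : Fin n →₀ ℕ) = 0 := by simp [deg]

lemma deg_single (i : Fin n) (m : ℕ) : deg (Finsupp.single i m) = m := by
  simp [deg, Finsupp.sum_single_index]

lemma deg_eq_zero_iff (d : Fin n →₀ ℕ) : deg d = 0 ↔ d = 0 := by
  rw [deg_eq_degree, Finsupp.degree_eq_zero_iff]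

lemma apply_le_deg (d : Fin n →₀ ℕ) (i : Fin n) : d i ≤ deg d := by
  rw [deg_eq_degree]; exact Finsupp.le_degree i d

namespace OrderGE

lemma zero (m : ℕ) : OrderGE (0 : FPS n) m := by intro d _; simp

lemma mono {F : FPS n} {m m' : ℕ} (h : OrderGE F m) (hm : m' ≤ m) : OrderGE F m' :=
  fun d hd => h d (lt_of_lt_of_le hd hm)

lemma add {F G : FPS n} {m : ℕ} (hF : OrderGE F m) (hG : OrderGE G m) :
    OrderGE (F + G) m := by
  intro d hd; rw [map_add, hF d hd, hG d hd, add_zero]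

lemma neg {F : FPS n} {m : ℕ} (hF : OrderGE F m) : OrderGE (-F) m := by
  intro d hd; rw [map_neg, hF d hd, neg_zero]

lemma sub {F G : FPS n} {m : ℕ} (hF : OrderGE F m) (hG : OrderGE G m) :
    OrderGE (F - G) m := by
  intro d hd; rw [map_sub, hF d hd, hG d hd, sub_zero]

lemma smul {F : FPS n} {m : ℕ} (c : ℂ) (hF : OrderGE F m) : OrderGE (c • F) m := by
  intro d hd
  rw [MvPowerSeries.coeff_smul, hF d hd, mul_zero]

lemma sum {α : Type*} {s : Finset α} {F : α → FPS n} {m : ℕ}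
    (h : ∀ a ∈ s, OrderGE (F a) m) : OrderGE (∑ a ∈ s, F a) m := by
  intro d hd
  rw [map_sum]
  exact Finset.sum_eq_zero fun a ha => h a ha d hd

lemma mul {F G : FPS n} {a b : ℕ} (hF : OrderGE F a) (hG : OrderGE G b) :
    OrderGE (F * G) (a + b) := by
  intro d hd
  rw [MvPowerSeries.coeff_mul]
  apply Finset.sum_eq_zero
  rintro ⟨d₁, d₂⟩ hmem
  have hsum : d₁ + d₂ = d := Finset.HasAntidiagonal.mem_antidiagonal.mp hmem
  have : deg d₁ + deg d₂ < a + b := by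
    rw [← deg_add, hsum]; exact hd
  rcases lt_or_ge (deg d₁) a with h1 | h1
  · rw [hF d₁ h1, zero_mul]
  · have : deg d₂ < b := by omega
    rw [hG d₂ this, mul_zero]

lemma mul_left {F G : FPS n} {b : ℕ} (hG : OrderGE G b) : OrderGE (F * G) b := by
  have := OrderGE.mul (F := F) (a := 0) (fun d hd => absurd hd (by omega)) hG
  simpa using this

lemma mul_right {F G : FPS n} {a : ℕ} (hF : OrderGE F a) : OrderGE (F * G) a := by
  have := OrderGE.mul hF (G := G) (b := 0) (fun d hd => absurd hd (by omega))
  simpa using this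

end OrderGE

lemma orderGE_X (i : Fin n) : OrderGE (Z i) 1 := by
  intro d hd
  have hd0 : d = 0 := by
    have := (deg_eq_zero_iff d).mp (by omega)
    exact this
  subst hd0
  simp [Z, MvPowerSeries.coeff_zero_X]

lemma orderGE_one_iff {F : FPS n} : OrderGE F 1 ↔ constantCoeff (σ := Fin n) (R := ℂ) F = 0 := by
  constructor
  · intro h
    have := h 0 (by rw [deg_zero]; omega)
    simpa [MvPowerSeries.coeff_zero_eq_constantCoeff] using this
  · intro h d hd
    have hd0 : d = 0 := (deg_eq_zero_iff d).mp (by omega)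
    subst hd0
    simpa [MvPowerSeries.coeff_zero_eq_constantCoeff] using h


/-- least index in the support of a nonzero exponent -/
def mindex (d : Fin n →₀ ℕ) (hd : d ≠ 0) : Fin n :=
  d.support.min' (Finsupp.support_nonempty_iff.mpr hd)

lemma mindex_congr {d d' : Fin n →₀ ℕ} (h : d = d') (hd : d ≠ 0) :
    mindex d hd = mindex d' (h ▸ hd) := by subst h; rfl

lemma mindex_mem {d : Fin n →₀ ℕ} (hd : d ≠ 0) : mindex d hd ∈ d.support :=
  Finset.min'_mem _ _

lemma add_single_ne_zero (e : Fin n →₀ ℕ) (i : Fin n) : e + Finsupp.single i 1 ≠ 0 := by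
  intro h
  have := DFunLike.congr_fun h i
  simp [Finsupp.single_apply] at this

/-- split a series with zero constant term as `∑ i, Z i * G i` -/
lemma exists_split (F : FPS n) (hF : constantCoeff (σ := Fin n) (R := ℂ) F = 0) :
    ∃ G : Fin n → FPS n, F = ∑ i, Z i * G i ∧
      ∀ i e, MvPowerSeries.coeff (R := ℂ) e (G i) ≠ 0 →
        MvPowerSeries.coeff (R := ℂ) (e + Finsupp.single i 1) F ≠ 0 := by
  classical
  refine ⟨fun i => @id (FPS n) fun e =>
    if mindex (e + Finsupp.single i 1) (add_single_ne_zero e i) = i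
    then MvPowerSeries.coeff (R := ℂ) (e + Finsupp.single i 1) F else 0, ?_, ?_⟩
  · ext d
    rw [map_sum]
    rcases eq_or_ne d 0 with rfl | hd
    · rw [show MvPowerSeries.coeff (R := ℂ) (0 : Fin n →₀ ℕ) F = 0 by
        simpa [MvPowerSeries.coeff_zero_eq_constantCoeff] using hF]
      refine (Finset.sum_eq_zero fun i _ => ?_).symm
      have hz : (Z i : FPS n) = MvPowerSeries.monomial (R := ℂ) (Finsupp.single i 1) 1 := rfl
      rw [hz, MvPowerSeries.coeff_monomial_mul]
      rw [if_neg]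
      intro hle
      have := hle i
      simp [Finsupp.single_apply] at this
    · set i₀ := mindex d hd with hi₀
      have hi₀mem : d i₀ ≠ 0 := Finsupp.mem_support_iff.mp (mindex_mem hd)
      have hle : Finsupp.single i₀ 1 ≤ d := Finsupp.single_le_iff.mpr (by omega)
      have hcancel : d - Finsupp.single i₀ 1 + Finsupp.single i₀ 1 = d :=
        tsub_add_cancel_of_le hle
      rw [Finset.sum_eq_single i₀]
      · show MvPowerSeries.coeff (R := ℂ) d F = MvPowerSeries.coeff (R := ℂ) d (Z i₀ * _)
        have hz : (Z i₀ : FPS n) = MvPowerSeries.monomial (R := ℂ) (Finsupp.single i₀ 1) 1 := rfl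
        rw [hz, MvPowerSeries.coeff_monomial_mul, if_pos hle, one_mul]
        show _ = (if mindex ((d - Finsupp.single i₀ 1) + Finsupp.single i₀ 1) _ = i₀ then
          MvPowerSeries.coeff (R := ℂ) ((d - Finsupp.single i₀ 1) + Finsupp.single i₀ 1) F else 0)
        rw [mindex_congr hcancel]
        simp only [hcancel, ← hi₀]
        simp
      · intro i _ hii
        show MvPowerSeries.coeff (R := ℂ) d (Z i * _) = 0
        have hz : (Z i : FPS n) = MvPowerSeries.monomial (R := ℂ) (Finsupp.single i 1) 1 := rfl
        rw [hz, MvPowerSeries.coeff_monomial_mul]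
        split_ifs with hle'
        · have hcancel' : d - Finsupp.single i 1 + Finsupp.single i 1 = d :=
            tsub_add_cancel_of_le hle'
          rw [one_mul]
          show (if mindex ((d - Finsupp.single i 1) + Finsupp.single i 1) _ = i then
            MvPowerSeries.coeff (R := ℂ) ((d - Finsupp.single i 1) + Finsupp.single i 1) F else 0) = 0
          rw [mindex_congr hcancel']
          rw [if_neg]
          rw [← hi₀] at *
          intro h; exact hii (by rw [← h])
        · rfl
      · intro h; exact absurd (Finset.mem_univ i₀) h
  · intro i e h
    by_contra h0
    apply h
    show (if mindex (e + Finsupp.single i 1) (add_single_ne_zero e i) = i then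
      MvPowerSeries.coeff (R := ℂ) (e + Finsupp.single i 1) F else 0) = 0
    rw [h0]
    simp

/-- an algebra automorphism of `ℂ[[z]]` preserves vanishing of constant term -/
lemma constantCoeff_map_eq_zero (e : FPS n ≃ₐ[ℂ] FPS n) {F : FPS n}
    (hF : constantCoeff (σ := Fin n) (R := ℂ) F = 0) : constantCoeff (σ := Fin n) (R := ℂ) (e F) = 0 := by
  by_contra h
  have hunit : IsUnit (e F) := by
    rw [MvPowerSeries.isUnit_iff_constantCoeff]
    exact isUnit_iff_ne_zero.mpr h
  have : IsUnit F := by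
    have := hunit.map e.symm.toAlgHom
    simpa using this
  rw [MvPowerSeries.isUnit_iff_constantCoeff, hF] at this
  exact not_isUnit_zero this

/-- locality: an algebra automorphism preserves order -/
lemma map_orderGE (e : FPS n ≃ₐ[ℂ] FPS n) :
    ∀ (m : ℕ) (F : FPS n), OrderGE F m → OrderGE (e F) m := by
  intro m
  induction m with
  | zero => intro F _ d hd; omega
  | succ m ih =>
    intro F hF
    have hc : constantCoeff (σ := Fin n) (R := ℂ) F = 0 := by
      have := hF 0 (by rw [deg_zero]; omega)
      simpa [MvPowerSeries.coeff_zero_eq_constantCoeff] using this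
    obtain ⟨G, hFG, hsupp⟩ := exists_split F hc
    have hGi : ∀ i, OrderGE (G i) m := by
      intro i d
      intro hd
      by_contra hne
      have := hsupp i d hne
      have h2 := hF (d + Finsupp.single i 1) (by rw [deg_add, deg_single]; omega)
      exact this h2
    rw [hFG, map_sum]
    apply OrderGE.sum
    intro i _
    rw [map_mul]
    have h1 : OrderGE (e (Z i)) 1 := by
      rw [orderGE_one_iff]
      apply constantCoeff_map_eq_zero
      simp [Z, MvPowerSeries.constantCoeff_X]
    have := OrderGE.mul h1 (ih (G i) (hGi i))
    simpa [Nat.add_comm] using this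


/-- coercion `MvPolynomial → MvPowerSeries` as a ring hom, abbreviated -/
def pc : MvPolynomial (Fin n) ℂ →+* FPS n := MvPolynomial.coeToMvPowerSeries.ringHom

lemma pc_coeff (P : MvPolynomial (Fin n) ℂ) (e : Fin n →₀ ℕ) :
    MvPowerSeries.coeff (R := ℂ) e (pc P) = MvPolynomial.coeff e P := by
  rw [pc, MvPolynomial.coeToMvPowerSeries.ringHom_apply, MvPolynomial.coeff_coe]

lemma pc_eq_coe (P : MvPolynomial (Fin n) ℂ) : pc P = (P : FPS n) :=
  MvPolynomial.coeToMvPowerSeries.ringHom_apply P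

lemma pc_X (i : Fin n) : pc (MvPolynomial.X i) = Z i := by
  rw [pc_eq_coe, MvPolynomial.coe_X]; rfl

/-- the monomial `∏ zᵢ^{dᵢ}` built from substitutions `g i` -/
def mprod (g : Fin n → FPS n) (d : Fin n →₀ ℕ) : FPS n := d.prod fun i m => g i ^ m

lemma mprod_add_single (g : Fin n → FPS n) (d : Fin n →₀ ℕ) (i : Fin n) :
    mprod g (d + Finsupp.single i 1) = mprod g d * g i := by
  classical
  unfold mprod
  rw [Finsupp.prod_add_index' (fun a => pow_zero (g a)) (fun a b₁ b₂ => pow_add (g a) b₁ b₂)]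
  congr 1
  rw [Finsupp.prod_single_index (h := fun a b => g a ^ b) (pow_zero (g i)), pow_one]

lemma mprod_zero (g : Fin n → FPS n) : mprod g 0 = 1 := rfl

lemma mprod_Z_eq (d : Fin n →₀ ℕ) : mprod Z d = pc (MvPolynomial.monomial d 1) := by
  classical
  rw [← MvPolynomial.prod_X_pow_eq_monomial, map_prod]
  rw [mprod]
  rw [Finsupp.prod]
  exact Finset.prod_congr rfl fun i _ => by rw [map_pow, pc_X]

lemma pc_monomial (d : Fin n →₀ ℕ) (c : ℂ) :
    pc (MvPolynomial.monomial d c) = c • mprod Z d := by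
  ext e
  rw [pc_coeff, MvPolynomial.coeff_monomial, MvPowerSeries.coeff_smul, mprod_Z_eq, pc_coeff,
    MvPolynomial.coeff_monomial]
  split_ifs <;> simp

lemma coeff_mprod_Z (d e : Fin n →₀ ℕ) :
    MvPowerSeries.coeff (R := ℂ) e (mprod Z d) = if d = e then 1 else 0 := by
  rw [mprod_Z_eq, pc_coeff, MvPolynomial.coeff_monomial]

lemma orderGE_mprod_Z (d : Fin n →₀ ℕ) : OrderGE (mprod Z d) (deg d) := by
  intro e he
  rw [coeff_mprod_Z, if_neg]
  rintro rfl; omega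

lemma orderGE_pc {P : MvPolynomial (Fin n) ℂ} {t : ℕ}
    (h : ∀ d, MvPolynomial.coeff d P ≠ 0 → t ≤ deg d) : OrderGE (pc P) t := by
  intro e he
  rw [pc_coeff]
  by_contra hc
  exact absurd (h e hc) (by omega)

lemma orderGE_pc_homog {P : MvPolynomial (Fin n) ℂ} {h : ℕ}
    (hP : P.IsHomogeneous h) : OrderGE (pc P) h := by
  apply orderGE_pc
  intro d hd
  have := hP.coeff_eq_zero (d := d)
  by_contra hlt
  exact hd (this (by rw [← deg_eq_degree]; omega))

/-- first-order Taylor term of the monomial `z^d` in directions `w` -/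
def mtay (w : Fin n → FPS n) (d : Fin n →₀ ℕ) : FPS n :=
  ∑ j, (d j : ℂ) • (w j * mprod Z (d - Finsupp.single j 1))

lemma sub_single_add_single {d : Fin n →₀ ℕ} {i j : Fin n} (hij : j ≠ i) :
    (d + Finsupp.single i 1) - Finsupp.single j 1 = (d - Finsupp.single j 1) + Finsupp.single i 1 := by
  ext a
  simp only [Finsupp.add_apply, Finsupp.tsub_apply, Finsupp.single_apply]
  by_cases h1 : i = a <;> by_cases h2 : j = a
  · exact absurd (h2.trans h1.symm) hij
  all_goals simp only [if_pos, if_neg, h1, h2, if_true, if_false]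
  all_goals omega

lemma mtay_add_single (w : Fin n → FPS n) (d : Fin n →₀ ℕ) (i : Fin n) :
    mtay w (d + Finsupp.single i 1) = mtay w d * Z i + w i * mprod Z d := by
  classical
  set e := d + Finsupp.single i 1 with he
  rw [mtay, mtay, Finset.sum_mul]
  rw [← Finset.add_sum_erase _ _ (Finset.mem_univ i),
      ← Finset.add_sum_erase _
        (fun j => ((d j : ℂ) • (w j * mprod Z (d - Finsupp.single j 1))) * Z i)
        (Finset.mem_univ i)]
  have hterm : ∀ j ∈ Finset.univ.erase i,
      (e j : ℂ) • (w j * mprod Z (e - Finsupp.single j 1))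
      = ((d j : ℂ) • (w j * mprod Z (d - Finsupp.single j 1))) * Z i := by
    intro j hj
    have hji : j ≠ i := (Finset.mem_erase.mp hj).1
    have h1 : e - Finsupp.single j 1 = (d - Finsupp.single j 1) + Finsupp.single i 1 := by
      rw [he]; exact sub_single_add_single hji
    have h2 : e j = d j := by
      rw [he, Finsupp.add_apply, Finsupp.single_apply,
        if_neg (fun h : i = j => hji h.symm), add_zero]
    rw [h1, h2, mprod_add_single, smul_mul_assoc, mul_assoc]
  rw [Finset.sum_congr rfl hterm]
  have hsub : e - Finsupp.single i 1 = d := by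
    rw [he]; ext a; simp [Finsupp.single_apply]
  have hei : e i = d i + 1 := by
    rw [he, Finsupp.add_apply, Finsupp.single_apply, if_pos rfl]
  have hi : (e i : ℂ) • (w i * mprod Z (e - Finsupp.single i 1))
      = ((d i : ℂ) • (w i * mprod Z (d - Finsupp.single i 1))) * Z i + w i * mprod Z d := by
    rw [hsub, hei]
    push_cast
    rcases Nat.eq_zero_or_pos (d i) with h0 | hpos
    · rw [h0]
      simp
    · have hle : Finsupp.single i 1 ≤ d := Finsupp.single_le_iff.mpr hpos
      have hc : (d - Finsupp.single i 1) + Finsupp.single i 1 = d := tsub_add_cancel_of_le hle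
      calc ((d i : ℂ) + 1) • (w i * mprod Z d)
          = (d i : ℂ) • (w i * mprod Z d) + w i * mprod Z d := by
            rw [add_smul, one_smul]
        _ = _ := by
            rw [← hc, mprod_add_single, smul_mul_assoc, mul_assoc, hc]
  rw [hi]
  ring

/-- Taylor approximation of monomials with quadratic error bound -/
lemma taylor_mon (w : Fin n → FPS n) (r : ℕ) (hw : ∀ j, OrderGE (w j) (r + 1)) :
    ∀ (N : ℕ) (d : Fin n →₀ ℕ), deg d = N →
      OrderGE (mprod (fun i => Z i + w i) d - mprod Z d - mtay w d) (N + 2 * r) := by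
  intro N
  induction N with
  | zero =>
    intro d hd
    have : d = 0 := (deg_eq_zero_iff d).mp hd
    subst this
    rw [mprod_zero, mprod_zero, mtay]
    simpa using OrderGE.zero _
  | succ N ih =>
    intro d hd
    have hdne : d ≠ 0 := by
      intro h; subst h; rw [deg_zero] at hd; omega
    set i := mindex d hdne with hidef
    have hmem : d i ≠ 0 := Finsupp.mem_support_iff.mp (mindex_mem hdne)
    have hle : Finsupp.single i 1 ≤ d := Finsupp.single_le_iff.mpr (by omega)
    set d' := d - Finsupp.single i 1 with hd'def
    have hc : d' + Finsupp.single i 1 = d := tsub_add_cancel_of_le hle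
    have hdeg' : deg d' = N := by
      have := deg_add d' (Finsupp.single i 1)
      rw [hc, deg_single] at this
      omega
    have hΔ := ih d' hdeg'
    have hwi1 : OrderGE (Z i + w i) 1 :=
      (orderGE_X i).add ((hw i).mono (by omega))
    have hmt : OrderGE (mtay w d') (N + r) := by
      rw [mtay]
      apply OrderGE.sum
      intro j _
      rcases Nat.eq_zero_or_pos (d' j) with h0 | hpos
      · rw [h0]; push_cast; rw [zero_smul]; exact OrderGE.zero _
      · apply OrderGE.smul
        have hlej : Finsupp.single j 1 ≤ d' := Finsupp.single_le_iff.mpr hpos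
        have hcj : (d' - Finsupp.single j 1) + Finsupp.single j 1 = d' := tsub_add_cancel_of_le hlej
        have hdegj : deg (d' - Finsupp.single j 1) = N - 1 := by
          have := deg_add (d' - Finsupp.single j 1) (Finsupp.single j 1)
          rw [hcj, deg_single, hdeg'] at this
          omega
        have hN1 : 1 ≤ N := by
          have := deg_add (d' - Finsupp.single j 1) (Finsupp.single j 1)
          rw [hcj, deg_single, hdeg'] at this
          omega
        have := (hw j).mul (hdegj ▸ orderGE_mprod_Z (d' - Finsupp.single j 1))
        exact this.mono (by omega)
    have key : mprod (fun i => Z i + w i) d - mprod Z d - mtay w d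
        = (mprod (fun i => Z i + w i) d' - mprod Z d' - mtay w d') * (Z i + w i)
          + mtay w d' * w i := by
      rw [← hc, mprod_add_single, mprod_add_single, mtay_add_single]
      ring
    rw [key]
    apply OrderGE.add
    · exact ((hΔ.mul hwi1).mono (by omega))
    · exact ((hmt.mul (hw i)).mono (by omega))

lemma aeval_monomial_mprod (g : Fin n → FPS n) (d : Fin n →₀ ℕ) (c : ℂ) :
    MvPolynomial.aeval g (MvPolynomial.monomial d c) = c • mprod g d := by
  rw [MvPolynomial.aeval_monomial, Algebra.smul_def]
  rfl

lemma pderiv_term (w : Fin n → FPS n) (d : Fin n →₀ ℕ) (c : ℂ) :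
    ∑ j, w j * pc (MvPolynomial.pderiv j (MvPolynomial.monomial d c)) = c • mtay w d := by
  rw [mtay, Finset.smul_sum]
  apply Finset.sum_congr rfl
  intro j _
  rw [MvPolynomial.pderiv_monomial, pc_monomial]
  rw [mul_smul_comm, smul_smul]

/-- Taylor formula for a polynomial, with quadratic error -/
lemma taylor_poly (w : Fin n → FPS n) (r : ℕ) (hw : ∀ j, OrderGE (w j) (r + 1))
    (S : MvPolynomial (Fin n) ℂ) (t : ℕ)
    (hS : ∀ d, MvPolynomial.coeff d S ≠ 0 → t ≤ deg d) :
    OrderGE (MvPolynomial.aeval (fun i => Z i + w i) S - pc S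
      - ∑ j, w j * pc (MvPolynomial.pderiv j S)) (t + 2 * r) := by
  classical
  have key : MvPolynomial.aeval (fun i => Z i + w i) S - pc S
      - ∑ j, w j * pc (MvPolynomial.pderiv j S)
      = ∑ d ∈ S.support, (MvPolynomial.coeff d S) •
          (mprod (fun i => Z i + w i) d - mprod Z d - mtay w d) := by
    conv_lhs => rw [← MvPolynomial.support_sum_monomial_coeff S]
    rw [map_sum, map_sum]
    have : ∀ j : Fin n, MvPolynomial.pderiv j (∑ d ∈ S.support,
        MvPolynomial.monomial d (MvPolynomial.coeff d S)) =
        ∑ d ∈ S.support, MvPolynomial.pderiv j (MvPolynomial.monomial d (MvPolynomial.coeff d S)) :=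
      fun j => map_sum _ _ _
    simp only [this, map_sum, Finset.mul_sum]
    rw [Finset.sum_comm]
    rw [← Finset.sum_sub_distrib, ← Finset.sum_sub_distrib]
    apply Finset.sum_congr rfl
    intro d _
    rw [aeval_monomial_mprod, pc_monomial, pderiv_term]
    rw [smul_sub, smul_sub]
  rw [key]
  apply OrderGE.sum
  intro d hd
  apply OrderGE.smul
  have hdeg : t ≤ deg d := hS d (MvPolynomial.mem_support_iff.mp hd)
  exact (taylor_mon w r hw (deg d) d rfl).mono (by omega)

/-- an algebra automorphism acts on (coerced) polynomials by substitution -/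
lemma algEquiv_pc (e : FPS n ≃ₐ[ℂ] FPS n) (S : MvPolynomial (Fin n) ℂ) :
    e (pc S) = MvPolynomial.aeval (fun i => e (Z i)) S := by
  induction S using MvPolynomial.induction_on with
  | C a =>
    rw [MvPolynomial.aeval_C, show MvPolynomial.C a = MvPolynomial.monomial 0 a from
      MvPolynomial.C_apply, pc_monomial, show mprod Z (0 : Fin n →₀ ℕ) = 1 from rfl,
      map_smul, map_one, Algebra.algebraMap_eq_smul_one]
  | add p q hp hq => rw [map_add, map_add, hp, hq, map_add]
  | mul_X p i hp => rw [map_mul, map_mul, hp, pc_X, map_mul, MvPolynomial.aeval_X]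

/-- key bound : if `e` is tangent to the identity to order `s`, then
`e F - F` has order at least `min (t + s) (...)` for `F` of order `t`. -/
lemma algEquiv_sub_orderGE (e : FPS n ≃ₐ[ℂ] FPS n) (s : ℕ)
    (he : ∀ i, OrderGE (e (Z i) - Z i) (s + 1)) :
    ∀ (m : ℕ) (t : ℕ) (F : FPS n), 1 ≤ t → OrderGE F t → m ≤ t + s →
      OrderGE (e F - F) m := by
  intro m
  induction m with
  | zero => intro t F _ _ _ d hd; omega
  | succ m ih =>
    intro t F ht hF hm
    have hc : constantCoeff (σ := Fin n) (R := ℂ) F = 0 := by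
      have := hF 0 (by rw [deg_zero]; omega)
      simpa [MvPowerSeries.coeff_zero_eq_constantCoeff] using this
    obtain ⟨G, hFG, hsupp⟩ := exists_split F hc
    have hGi : ∀ i, OrderGE (G i) (t - 1) := by
      intro i d hd
      by_contra hne
      exact hsupp i d hne (hF (d + Finsupp.single i 1) (by rw [deg_add, deg_single]; omega))
    have key : e F - F = ∑ i, ((e (Z i) - Z i) * e (G i) + Z i * (e (G i) - G i)) := by
      rw [hFG, map_sum, ← Finset.sum_sub_distrib]
      apply Finset.sum_congr rfl
      intro i _
      rw [map_mul]
      ring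
    rw [key]
    apply OrderGE.sum
    intro i _
    apply OrderGE.add
    · have h1 := (he i).mul (map_orderGE e (t-1) (G i) (hGi i))
      exact h1.mono (by omega)
    · set c := constantCoeff (σ := Fin n) (R := ℂ) (G i) with hcdef
      set G' := G i - MvPowerSeries.C (σ := Fin n) (R := ℂ) c with hG'def
      have heG : e (G i) - G i = e G' - G' := by
        rw [hG'def]
        have : e (MvPowerSeries.C (σ := Fin n) (R := ℂ) c) = MvPowerSeries.C (σ := Fin n) (R := ℂ) c := by
          exact e.commutes c
        rw [map_sub, this]
        ring
      have hG'1 : OrderGE G' 1 := by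
        intro d hd
        have hd0 : d = 0 := (deg_eq_zero_iff d).mp (by omega)
        subst hd0
        rw [hG'def, map_sub]
        simp [MvPowerSeries.coeff_zero_eq_constantCoeff, ← hcdef]
      have hG't : OrderGE G' (t - 1) := by
        intro d hd
        rcases eq_or_ne d 0 with rfl | hdne
        · exact hG'1 0 (by rw [deg_zero]; omega)
        · rw [hG'def, map_sub, hGi i d hd, MvPowerSeries.coeff_C, if_neg hdne]
          simp
      have hG'max : OrderGE G' (max (t-1) 1) := by
        rcases max_cases (t-1) 1 with ⟨hmax, _⟩ | ⟨hmax, _⟩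
        · rw [hmax]; exact hG't
        · rw [hmax]; exact hG'1
      have := ih (max (t-1) 1) G' (le_max_right _ _) hG'max (by omega)
      rw [← heG] at this
      have h2 := (orderGE_X i).mul this
      exact h2.mono (by omega)

lemma deg_eq_sum_univ (d : Fin n →₀ ℕ) : deg d = ∑ j, d j := by
  classical
  exact Finsupp.sum_fintype _ _ (fun _ => rfl)

/-- Euler's identity for homogeneous polynomials -/
lemma euler {p : MvPolynomial (Fin n) ℂ} {k : ℕ} (hp : p.IsHomogeneous k) :
    ∑ j, MvPolynomial.X j * MvPolynomial.pderiv j p = (k : ℂ) • p := by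
  classical
  conv_lhs => rw [← MvPolynomial.support_sum_monomial_coeff p]
  conv_rhs => rw [← MvPolynomial.support_sum_monomial_coeff p]
  simp only [map_sum, Finset.mul_sum, Finset.smul_sum]
  rw [Finset.sum_comm]
  apply Finset.sum_congr rfl
  intro d hd
  have hdeg : deg d = k := by
    by_contra h
    exact (MvPolynomial.mem_support_iff.mp hd)
      (hp.coeff_eq_zero (by rw [← deg_eq_degree]; exact h))
  set c := MvPolynomial.coeff d p with hc
  have step1 : ∀ j : Fin n, MvPolynomial.X j * MvPolynomial.pderiv j (MvPolynomial.monomial d c)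
      = MvPolynomial.monomial d (c * (d j : ℂ)) := by
    intro j
    rw [MvPolynomial.pderiv_monomial]
    rcases Nat.eq_zero_or_pos (d j) with h0 | hpos
    · rw [h0]
      push_cast
      rw [mul_zero, map_zero, mul_zero, map_zero]
    · have hle : Finsupp.single j 1 ≤ d := Finsupp.single_le_iff.mpr hpos
      have : (MvPolynomial.X j : MvPolynomial (Fin n) ℂ)
          = MvPolynomial.monomial (Finsupp.single j 1) 1 := rfl
      rw [this, MvPolynomial.monomial_mul, one_mul, add_comm, tsub_add_cancel_of_le hle]
  rw [Finset.sum_congr rfl (fun j _ => step1 j)]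
  rw [← map_sum, ← Finset.mul_sum]
  have : (∑ j, (d j : ℂ)) = (k : ℂ) := by
    rw [← hdeg, deg_eq_sum_univ]
    push_cast
    rfl
  rw [this, MvPolynomial.smul_monomial, smul_eq_mul, mul_comm]

/-- the key polynomial bracket identity -/
lemma bracket_id {p q : MvPolynomial (Fin n) ℂ} {k l : ℕ}
    (hp : p.IsHomogeneous k) (hq : q.IsHomogeneous l) (i : Fin n) :
    (∑ j, (q * MvPolynomial.X j) * MvPolynomial.pderiv j (p * MvPolynomial.X i))
      - (∑ j, (p * MvPolynomial.X j) * MvPolynomial.pderiv j (q * MvPolynomial.X i))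
    = (MvPolynomial.C ((k : ℂ) - (l : ℂ)) * (p * q)) * MvPolynomial.X i := by
  classical
  have h1 : ∀ j : Fin n, (q * MvPolynomial.X j) * MvPolynomial.pderiv j (p * MvPolynomial.X i)
      - (p * MvPolynomial.X j) * MvPolynomial.pderiv j (q * MvPolynomial.X i)
      = (q * MvPolynomial.X i) * (MvPolynomial.X j * MvPolynomial.pderiv j p)
        - (p * MvPolynomial.X i) * (MvPolynomial.X j * MvPolynomial.pderiv j q) := by
    intro j
    rw [MvPolynomial.pderiv_mul, MvPolynomial.pderiv_mul]
    rcases eq_or_ne j i with rfl | hji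
    · rw [MvPolynomial.pderiv_X_self]
      ring
    · rw [MvPolynomial.pderiv_X_of_ne (fun h : i = j => hji h.symm)]
      ring
  rw [← Finset.sum_sub_distrib, Finset.sum_congr rfl (fun j _ => h1 j),
    Finset.sum_sub_distrib, ← Finset.mul_sum, ← Finset.mul_sum, euler hp, euler hq]
  rw [MvPolynomial.smul_eq_C_mul, MvPolynomial.smul_eq_C_mul, map_sub]
  ring

lemma coeff_Z_of_deg_ne_one {d : Fin n →₀ ℕ} (hd : deg d ≠ 1) (i : Fin n) :
    MvPowerSeries.coeff (R := ℂ) d (Z i) = 0 := by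
  have : (Z i : FPS n) = MvPowerSeries.monomial (R := ℂ) (Finsupp.single i 1) 1 := rfl
  rw [this, MvPowerSeries.coeff_monomial]
  split_ifs with h
  · exact absurd (by rw [h, deg_single]) hd
  · rfl

lemma orderGE_pc_pderiv (S : MvPolynomial (Fin n) ℂ) (t : ℕ)
    (hS : ∀ d, MvPolynomial.coeff d S ≠ 0 → t ≤ deg d) (j : Fin n) :
    OrderGE (pc (MvPolynomial.pderiv j S)) (t - 1) := by
  classical
  have hrw : pc (MvPolynomial.pderiv j S) = ∑ d ∈ S.support,
      pc (MvPolynomial.pderiv j (MvPolynomial.monomial d (MvPolynomial.coeff d S))) := by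
    conv_lhs => rw [← MvPolynomial.support_sum_monomial_coeff S]
    rw [map_sum, map_sum]
  rw [hrw]
  apply OrderGE.sum
  intro d hd
  rw [MvPolynomial.pderiv_monomial, pc_monomial]
  rcases Nat.eq_zero_or_pos (d j) with h0 | hpos
  · rw [h0]
    push_cast
    rw [mul_zero, zero_smul]
    exact OrderGE.zero _
  · apply OrderGE.smul
    have hdeg : t ≤ deg d := hS d (MvPolynomial.mem_support_iff.mp hd)
    have hle : Finsupp.single j 1 ≤ d := Finsupp.single_le_iff.mpr hpos
    have hsub : deg (d - Finsupp.single j 1) = deg d - 1 := by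
      have := deg_add (d - Finsupp.single j 1) (Finsupp.single j 1)
      rw [tsub_add_cancel_of_le hle, deg_single] at this
      omega
    exact (orderGE_mprod_Z (d - Finsupp.single j 1)).mono (by omega)

lemma commutator_dicritic {k l : ℕ} (hkl : k ≠ l) {f g : FDiff n}
    (hf : IsDicriticDiffeo f k) (hg : IsDicriticDiffeo g l) :
    IsDicriticDiffeo ⁅f⁻¹, g⁻¹⁆ (k + l) := by
  classical
  obtain ⟨hk1, hfle, p, hphom, hpne, hpco⟩ := hf
  obtain ⟨hl1, hgle, q, hqhom, hqne, hqco⟩ := hg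
  have hfle' : ∀ i d, deg d ≤ k →
      MvPowerSeries.coeff (R := ℂ) d (f.unop (Z i)) = MvPowerSeries.coeff (R := ℂ) d (Z i) := hfle
  have hgle' : ∀ i d, deg d ≤ l →
      MvPowerSeries.coeff (R := ℂ) d (g.unop (Z i)) = MvPowerSeries.coeff (R := ℂ) d (Z i) := hgle
  have hpco' : ∀ i d, deg d = k + 1 →
      MvPowerSeries.coeff (R := ℂ) d (f.unop (Z i)) = MvPowerSeries.coeff (R := ℂ) d ((p : FPS n) * Z i) := hpco
  have hqco' : ∀ i d, deg d = l + 1 →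
      MvPowerSeries.coeff (R := ℂ) d (g.unop (Z i)) = MvPowerSeries.coeff (R := ℂ) d ((q : FPS n) * Z i) := hqco
  set u : Fin n → FPS n := fun i => f.unop (Z i) - Z i with hu
  set w : Fin n → FPS n := fun i => g.unop (Z i) - Z i with hw
  set Pser : Fin n → FPS n := fun i => pc (p * MvPolynomial.X i) with hPser
  set Qser : Fin n → FPS n := fun i => pc (q * MvPolynomial.X i) with hQser
  set a : Fin n → FPS n := fun i => u i - Pser i with ha
  set b : Fin n → FPS n := fun i => w i - Qser i with hb
  set Dp : Fin n → Fin n → FPS n :=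
    fun j i => pc (MvPolynomial.pderiv j (p * MvPolynomial.X i)) with hDp
  set Dq : Fin n → Fin n → FPS n :=
    fun j i => pc (MvPolynomial.pderiv j (q * MvPolynomial.X i)) with hDq
  set A : Fin n → FPS n := fun i => g.unop (f.unop (Z i)) with hA
  set B : Fin n → FPS n := fun i => f.unop (g.unop (Z i)) with hB
  set P₀ : MvPolynomial (Fin n) ℂ := MvPolynomial.C ((k : ℂ) - (l : ℂ)) * (p * q) with hP₀
  -- homogeneity facts
  have hpXhom : ∀ i : Fin n, (p * MvPolynomial.X i).IsHomogeneous (k+1) :=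
    fun i => hphom.mul (MvPolynomial.isHomogeneous_X ℂ i)
  have hqXhom : ∀ i : Fin n, (q * MvPolynomial.X i).IsHomogeneous (l+1) :=
    fun i => hqhom.mul (MvPolynomial.isHomogeneous_X ℂ i)
  have hpXco : ∀ i : Fin n, ∀ d, MvPolynomial.coeff d (p * MvPolynomial.X i) ≠ 0 →
      (k+1) ≤ deg d := by
    intro i d hd
    by_contra hlt
    exact hd ((hpXhom i).coeff_eq_zero (by rw [← deg_eq_degree]; omega))
  have hqXco : ∀ i : Fin n, ∀ d, MvPolynomial.coeff d (q * MvPolynomial.X i) ≠ 0 →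
      (l+1) ≤ deg d := by
    intro i d hd
    by_contra hlt
    exact hd ((hqXhom i).coeff_eq_zero (by rw [← deg_eq_degree]; omega))
  have hPord : ∀ i, OrderGE (Pser i) (k+1) := fun i => orderGE_pc_homog (hpXhom i)
  have hQord : ∀ i, OrderGE (Qser i) (l+1) := fun i => orderGE_pc_homog (hqXhom i)
  -- orders of u, w, a, b
  have hu_ord : ∀ i, OrderGE (u i) (k+1) := by
    intro i d hd
    simp only [hu]
    rw [map_sub, hfle' i d (by omega), sub_self]
  have hw_ord : ∀ i, OrderGE (w i) (l+1) := by
    intro i d hd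
    simp only [hw]
    rw [map_sub, hgle' i d (by omega), sub_self]
  have hpc_mulX : ∀ i, pc (p * MvPolynomial.X i) = (p : FPS n) * Z i := by
    intro i; rw [map_mul, pc_X, pc_eq_coe]
  have hqc_mulX : ∀ i, pc (q * MvPolynomial.X i) = (q : FPS n) * Z i := by
    intro i; rw [map_mul, pc_X, pc_eq_coe]
  have ha_ord : ∀ i, OrderGE (a i) (k+2) := by
    intro i d hd
    simp only [ha]
    rw [map_sub]
    rcases Nat.lt_or_ge (deg d) (k+1) with hcase | hcase
    · rw [hu_ord i d hcase, hPord i d hcase, sub_self]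
    · have hdeg : deg d = k + 1 := by omega
      simp only [hu, hPser]
      rw [map_sub, hpco' i d hdeg, coeff_Z_of_deg_ne_one (by omega) i, hpc_mulX i]
      ring
  have hb_ord : ∀ i, OrderGE (b i) (l+2) := by
    intro i d hd
    simp only [hb]
    rw [map_sub]
    rcases Nat.lt_or_ge (deg d) (l+1) with hcase | hcase
    · rw [hw_ord i d hcase, hQord i d hcase, sub_self]
    · have hdeg : deg d = l + 1 := by omega
      simp only [hw, hQser]
      rw [map_sub, hqco' i d hdeg, coeff_Z_of_deg_ne_one (by omega) i, hqc_mulX i]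
      ring
  -- decomposition of the diffeos
  have hfZ : ∀ i, f.unop (Z i) = Z i + Pser i + a i := by
    intro i; simp only [ha, hu]; ring
  have hgZ : ∀ i, g.unop (Z i) = Z i + Qser i + b i := by
    intro i; simp only [hb, hw]; ring
  -- error terms
  set e1 : Fin n → FPS n := fun i => g.unop (a i) - a i with he1
  set e2 : Fin n → FPS n := fun i =>
    g.unop (Pser i) - Pser i - ∑ j, w j * Dp j i with he2
  set e3 : Fin n → FPS n := fun i => ∑ j, b j * Dp j i with he3
  set f1 : Fin n → FPS n := fun i => f.unop (b i) - b i with hf1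
  set f2 : Fin n → FPS n := fun i =>
    f.unop (Qser i) - Qser i - ∑ j, u j * Dq j i with hf2
  set f3 : Fin n → FPS n := fun i => ∑ j, a j * Dq j i with hf3
  have he1_ord : ∀ i, OrderGE (e1 i) (k+l+2) := by
    intro i
    exact algEquiv_sub_orderGE g.unop l hw_ord (k+l+2) (k+2) (a i) (by omega)
      (ha_ord i) (by omega)
  have hf1_ord : ∀ i, OrderGE (f1 i) (k+l+2) := by
    intro i
    exact algEquiv_sub_orderGE f.unop k hu_ord (k+l+2) (l+2) (b i) (by omega)
      (hb_ord i) (by omega)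
  have hgZfun : (fun j => g.unop (Z j)) = fun j => Z j + w j := by
    funext j; simp only [hw]; ring
  have hfZfun : (fun j => f.unop (Z j)) = fun j => Z j + u j := by
    funext j; simp only [hu]; ring
  have he2_ord : ∀ i, OrderGE (e2 i) (k+l+2) := by
    intro i
    have h0 : g.unop (Pser i) = MvPolynomial.aeval (fun j => Z j + w j) (p * MvPolynomial.X i) := by
      simp only [hPser]
      rw [algEquiv_pc, hgZfun]
    have := taylor_poly w l hw_ord (p * MvPolynomial.X i) (k+1) (hpXco i)
    simp only [he2, h0, hDp]
    exact this.mono (by omega)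
  have hf2_ord : ∀ i, OrderGE (f2 i) (k+l+2) := by
    intro i
    have h0 : f.unop (Qser i) = MvPolynomial.aeval (fun j => Z j + u j) (q * MvPolynomial.X i) := by
      simp only [hQser]
      rw [algEquiv_pc, hfZfun]
    have := taylor_poly u k hu_ord (q * MvPolynomial.X i) (l+1) (hqXco i)
    simp only [hf2, h0, hDq]
    exact this.mono (by omega)
  have he3_ord : ∀ i, OrderGE (e3 i) (k+l+2) := by
    intro i
    simp only [he3]
    apply OrderGE.sum
    intro j _
    have := (hb_ord j).mul (orderGE_pc_pderiv (p * MvPolynomial.X i) (k+1) (hpXco i) j)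
    simp only [hDp]
    exact this.mono (by omega)
  have hf3_ord : ∀ i, OrderGE (f3 i) (k+l+2) := by
    intro i
    simp only [hf3]
    apply OrderGE.sum
    intro j _
    have := (ha_ord j).mul (orderGE_pc_pderiv (q * MvPolynomial.X i) (l+1) (hqXco i) j)
    simp only [hDq]
    exact this.mono (by omega)
  -- main congruence
  have hsplitw : ∀ i, ∑ j, w j * Dp j i = ∑ j, Qser j * Dp j i + ∑ j, b j * Dp j i := by
    intro i
    rw [← Finset.sum_add_distrib]
    apply Finset.sum_congr rfl
    intro j _
    simp only [hb]
    ring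
  have hsplitu : ∀ i, ∑ j, u j * Dq j i = ∑ j, Pser j * Dq j i + ∑ j, a j * Dq j i := by
    intro i
    rw [← Finset.sum_add_distrib]
    apply Finset.sum_congr rfl
    intro j _
    simp only [ha]
    ring
  have hAeq : ∀ i, A i = Z i + Qser i + b i + Pser i + (∑ j, Qser j * Dp j i)
      + (e3 i + e2 i + a i + e1 i) := by
    intro i
    have step : A i = g.unop (Z i) + g.unop (Pser i) + g.unop (a i) := by
      simp only [hA]
      rw [hfZ i, map_add, map_add]
    rw [step, hgZ i]
    have h2 : g.unop (Pser i) = Pser i + (∑ j, Qser j * Dp j i + ∑ j, b j * Dp j i) + e2 i := by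
      rw [← hsplitw i]
      simp only [he2]
      ring
    have h3 : g.unop (a i) = a i + e1 i := by simp only [he1]; ring
    rw [h2, h3]
    simp only [he3]
    ring
  have hBeq : ∀ i, B i = Z i + Pser i + a i + Qser i + (∑ j, Pser j * Dq j i)
      + (f3 i + f2 i + b i + f1 i) := by
    intro i
    have step : B i = f.unop (Z i) + f.unop (Qser i) + f.unop (b i) := by
      simp only [hB]
      rw [hgZ i, map_add, map_add]
    rw [step, hfZ i]
    have h2 : f.unop (Qser i) = Qser i + (∑ j, Pser j * Dq j i + ∑ j, a j * Dq j i) + f2 i := by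
      rw [← hsplitu i]
      simp only [hf2]
      ring
    have h3 : f.unop (b i) = b i + f1 i := by simp only [hf1]; ring
    rw [h2, h3]
    simp only [hf3]
    ring
  have hbr : ∀ i, (∑ j, Qser j * Dp j i) - (∑ j, Pser j * Dq j i)
      = pc (P₀ * MvPolynomial.X i) := by
    intro i
    have l1 : ∑ j, Qser j * Dp j i
        = pc (∑ j, (q * MvPolynomial.X j) * MvPolynomial.pderiv j (p * MvPolynomial.X i)) := by
      rw [map_sum]
      apply Finset.sum_congr rfl
      intro j _
      simp only [hQser, hDp]
      exact (map_mul pc _ _).symm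
    have l2 : ∑ j, Pser j * Dq j i
        = pc (∑ j, (p * MvPolynomial.X j) * MvPolynomial.pderiv j (q * MvPolynomial.X i)) := by
      rw [map_sum]
      apply Finset.sum_congr rfl
      intro j _
      simp only [hPser, hDq]
      exact (map_mul pc _ _).symm
    rw [l1, l2, ← map_sub]
    rw [show (∑ j, (q * MvPolynomial.X j) * MvPolynomial.pderiv j (p * MvPolynomial.X i))
      - (∑ j, (p * MvPolynomial.X j) * MvPolynomial.pderiv j (q * MvPolynomial.X i))
      = P₀ * MvPolynomial.X i from by rw [hP₀]; exact bracket_id hphom hqhom i]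
  have hABkey : ∀ i, A i - B i - pc (P₀ * MvPolynomial.X i)
      = (e3 i + e2 i + e1 i) - (f3 i + f2 i + f1 i) := by
    intro i
    rw [hAeq i, hBeq i, ← hbr i]
    ring
  have hABord : ∀ i, OrderGE (A i - B i - pc (P₀ * MvPolynomial.X i)) (k+l+2) := by
    intro i
    rw [hABkey i]
    exact (((he3_ord i).add (he2_ord i)).add (he1_ord i)).sub
      (((hf3_ord i).add (hf2_ord i)).add (hf1_ord i))
  have hP₀hom : P₀.IsHomogeneous (k + l) := by
    have := (MvPolynomial.isHomogeneous_C (Fin n) ((k : ℂ) - (l : ℂ))).mul (hphom.mul hqhom)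
    simpa [hP₀] using this
  have hP₀Xhom : ∀ i : Fin n, (P₀ * MvPolynomial.X i).IsHomogeneous (k+l+1) :=
    fun i => hP₀hom.mul (MvPolynomial.isHomogeneous_X ℂ i)
  have hABord1 : ∀ i, OrderGE (A i - B i) (k+l+1) := by
    intro i
    have : A i - B i = (A i - B i - pc (P₀ * MvPolynomial.X i)) + pc (P₀ * MvPolynomial.X i) := by
      ring
    rw [this]
    exact ((hABord i).mono (by omega)).add (orderGE_pc_homog (hP₀Xhom i))
  -- the commutator equation
  have hgrp : (g * f) * ⁅f⁻¹, g⁻¹⁆ = f * g := by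
    rw [commutatorElement_def]
    group
  have hχB : ∀ i, (⁅f⁻¹, g⁻¹⁆ : FDiff n).unop (B i) = A i := by
    intro i
    have h := congrArg MulOpposite.unop hgrp
    rw [MulOpposite.unop_mul, MulOpposite.unop_mul] at h
    have h2 := congrArg (fun (e : FPS n ≃ₐ[ℂ] FPS n) => e (Z i)) h
    simp only [AlgEquiv.mul_apply] at h2
    simp only [hA, hB]
    exact h2
  set v : Fin n → FPS n := fun i => (⁅f⁻¹, g⁻¹⁆ : FDiff n).unop (Z i) - Z i with hv
  have hveq : ∀ i, v i = (A i - B i)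
      - ((⁅f⁻¹, g⁻¹⁆ : FDiff n).unop (B i - Z i) - (B i - Z i)) := by
    intro i
    rw [map_sub, hχB i]
    simp only [hv]
    ring
  have hBZ : ∀ i, OrderGE (B i - Z i) (min k l + 1) := by
    intro i
    have hBi : B i - Z i = u i + f.unop (w i) := by
      simp only [hB]
      rw [show g.unop (Z i) = Z i + w i from by simp only [hw]; ring, map_add]
      simp only [hu]
      ring
    rw [hBi]
    exact ((hu_ord i).mono (by omega)).add
      ((map_orderGE f.unop (l+1) (w i) (hw_ord i)).mono (by omega))
  have hbase : ∀ i, OrderGE (v i) (min k l + 1) := by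
    intro i
    rw [hveq i]
    refine ((hABord1 i).mono (by omega)).sub ?_
    exact ((map_orderGE _ _ _ (hBZ i)).sub (hBZ i))
  have hstep : ∀ s, 1 ≤ s → (∀ i, OrderGE (v i) (s+1)) →
      ∀ i, OrderGE (v i) (min (k+l+1) (s+2)) := by
    intro s hs hvs i
    rw [hveq i]
    refine ((hABord1 i).mono (by omega)).sub ?_
    have hvs' : ∀ j, OrderGE ((⁅f⁻¹, g⁻¹⁆ : FDiff n).unop (Z j) - Z j) (s+1) := by
      intro j
      have := hvs j
      simpa only [hv] using this
    exact algEquiv_sub_orderGE _ s hvs' (min (k+l+1) (s+2)) (min k l + 1) (B i - Z i)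
      (by omega) (hBZ i) (by omega)
  have hclaim : ∀ t, t ≤ k + l → ∀ i, OrderGE (v i) (t+1) := by
    intro t
    induction t with
    | zero => intro _ i; exact (hbase i).mono (by omega)
    | succ t ih =>
      intro ht i
      rcases Nat.eq_zero_or_pos t with rfl | htpos
      · have := hstep (min k l) (by omega) hbase i
        exact this.mono (by omega)
      · have prev := ih (by omega)
        have := hstep t htpos prev i
        exact this.mono (by omega)
  have hfin : ∀ i, OrderGE (v i) (k+l+1) := by
    intro i
    have := hclaim (k+l) le_rfl i
    exact this
  have herr2 : ∀ i, OrderGE ((⁅f⁻¹, g⁻¹⁆ : FDiff n).unop (B i - Z i) - (B i - Z i)) (k+l+2) := by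
    intro i
    have hfin' : ∀ j, OrderGE ((⁅f⁻¹, g⁻¹⁆ : FDiff n).unop (Z j) - Z j) ((k+l)+1) := by
      intro j
      have := hfin j
      simpa only [hv] using this
    exact algEquiv_sub_orderGE _ (k+l) hfin' (k+l+2) (min k l + 1) (B i - Z i)
      (by omega) (hBZ i) (by omega)
  have hcompZ : ∀ i, comp (⁅f⁻¹, g⁻¹⁆ : FDiff n) i = Z i + v i := by
    intro i
    simp only [hv, comp]
    ring
  refine ⟨by omega, ?_, P₀, hP₀hom, ?_, ?_⟩
  · intro i d hd
    rw [hcompZ i, map_add, hfin i d (by omega), add_zero]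
  · rw [hP₀]
    refine mul_ne_zero ?_ (mul_ne_zero hpne hqne)
    rw [Ne, MvPolynomial.C_eq_zero]
    intro hcast
    apply hkl
    have : ((k : ℂ)) = ((l : ℂ)) := sub_eq_zero.mp hcast
    exact_mod_cast this
  · intro i d hd
    rw [hcompZ i, map_add, coeff_Z_of_deg_ne_one (by omega) i, zero_add]
    have hvco : MvPowerSeries.coeff (R := ℂ) d (v i) =
        MvPowerSeries.coeff (R := ℂ) d (pc (P₀ * MvPolynomial.X i)) := by
      rw [hveq i, map_sub, herr2 i d (by omega), sub_zero]
      have : MvPowerSeries.coeff (R := ℂ) d (A i - B i) =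
          MvPowerSeries.coeff (R := ℂ) d (A i - B i - pc (P₀ * MvPolynomial.X i)) +
          MvPowerSeries.coeff (R := ℂ) d (pc (P₀ * MvPolynomial.X i)) := by
        rw [← map_add]
        congr 1
        ring
      rw [this, hABord i d (by omega), zero_add]
    rw [hvco]
    rw [show pc (P₀ * MvPolynomial.X i) = (P₀ : FPS n) * Z i from by
      rw [map_mul, pc_X, pc_eq_coe]]

/-- a dicritic diffeomorphism is not the identity -/
lemma dicritic_ne_one {f : FDiff n} {k : ℕ} (hf : IsDicriticDiffeo f k) : f ≠ 1 := by
  obtain ⟨hk1, hle, p, hphom, hpne, hpco⟩ := hf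
  obtain ⟨d₀, hd₀⟩ := MvPolynomial.ne_zero_iff.mp hpne
  have hdeg₀ : deg d₀ = k := by
    by_contra h
    exact hd₀ (hphom.coeff_eq_zero (by rw [← deg_eq_degree]; exact h))
  have hd₀ne : d₀ ≠ 0 := by
    intro h
    subst h
    rw [show deg (0 : Fin n →₀ ℕ) = 0 from rfl] at hdeg₀
    omega
  obtain ⟨i, hi⟩ := Finsupp.support_nonempty_iff.mpr hd₀ne
  intro hone
  subst hone
  have hcomp : comp (1 : FDiff n) i = Z i := by
    show (MulOpposite.unop (1 : FDiff n)) (Z i) = Z i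
    rw [MulOpposite.unop_one]
    rfl
  have := hpco i (d₀ + Finsupp.single i 1) (by rw [deg_add, deg_single, hdeg₀])
  rw [hcomp, coeff_Z_of_deg_ne_one (by rw [deg_add, deg_single, hdeg₀]; omega) i] at this
  have hco : MvPowerSeries.coeff (R := ℂ) (d₀ + Finsupp.single i 1) ((p : FPS n) * Z i)
      = MvPolynomial.coeff d₀ p := by
    have hz : (Z i : FPS n) = MvPowerSeries.monomial (R := ℂ) (Finsupp.single i 1) 1 := rfl
    rw [hz, MvPowerSeries.coeff_mul_monomial, if_pos le_add_self, mul_one, add_tsub_cancel_right]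
    rw [MvPolynomial.coeff_coe]
  rw [hco] at this
  exact hd₀ this.symm


end AuxSolvable

/-- a subgroup of `Diff̂(ℂⁿ,0)` containing two dicritic
diffeomorphisms tangent to the identity with different orders is not solvable. -/
theorem not_solvable_of_two_dicritic_different_orders
    (n : ℕ) (G : Subgroup (FDiff n))
    (f g : FDiff n) (hf : f ∈ G) (hg : g ∈ G) (k l : ℕ) (hkl : k ≠ l)
    (hfd : IsDicriticDiffeo f k) (hgd : IsDicriticDiffeo g l) :
    ¬ IsSolvable G := by
  intro hsolv
  have key : ∀ m : ℕ, ∃ (x y : G) (kx ky : ℕ),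
      x ∈ derivedSeries G m ∧ y ∈ derivedSeries G m ∧ kx ≠ ky ∧ 1 ≤ kx ∧ 1 ≤ ky ∧
      IsDicriticDiffeo (x : FDiff n) kx ∧ IsDicriticDiffeo (y : FDiff n) ky := by
    intro m
    induction m with
    | zero =>
      refine ⟨⟨f, hf⟩, ⟨g, hg⟩, k, l, ?_, ?_, hkl, hfd.1, hgd.1, hfd, hgd⟩
      · simp [derivedSeries]
      · simp [derivedSeries]
    | succ m ih =>
      obtain ⟨x, y, kx, ky, hx, hy, hxyne, hkx, hky, hxd, hyd⟩ := ih
      have hc1mem : ⁅x⁻¹, y⁻¹⁆ ∈ derivedSeries G (m+1) := by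
        rw [derivedSeries_succ]
        exact Subgroup.commutator_mem_commutator ((derivedSeries G m).inv_mem hx)
          ((derivedSeries G m).inv_mem hy)
      have hc1coe : ((⁅x⁻¹, y⁻¹⁆ : G) : FDiff n) = ⁅(x : FDiff n)⁻¹, (y : FDiff n)⁻¹⁆ := by
        simp [commutatorElement_def]
      have hc1d : IsDicriticDiffeo ((⁅x⁻¹, y⁻¹⁆ : G) : FDiff n) (kx + ky) := by
        rw [hc1coe]
        exact commutator_dicritic hxyne hxd hyd
      have hc1memm : ⁅x⁻¹, y⁻¹⁆ ∈ derivedSeries G m := by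
        have h1 : derivedSeries G (m+1) ≤ derivedSeries G m := by
          rw [derivedSeries_succ]
          have := derivedSeries_normal G m
          exact Subgroup.commutator_le_left _ _
        exact h1 hc1mem
      have hc2mem : ⁅x⁻¹, (⁅x⁻¹, y⁻¹⁆ : G)⁻¹⁆ ∈ derivedSeries G (m+1) := by
        rw [derivedSeries_succ]
        exact Subgroup.commutator_mem_commutator ((derivedSeries G m).inv_mem hx)
          ((derivedSeries G m).inv_mem hc1memm)
      have hc2coe : ((⁅x⁻¹, (⁅x⁻¹, y⁻¹⁆ : G)⁻¹⁆ : G) : FDiff n)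
          = ⁅(x : FDiff n)⁻¹, ((⁅x⁻¹, y⁻¹⁆ : G) : FDiff n)⁻¹⁆ := by
        simp [commutatorElement_def]
      have hc2d : IsDicriticDiffeo ((⁅x⁻¹, (⁅x⁻¹, y⁻¹⁆ : G)⁻¹⁆ : G) : FDiff n) (kx + (kx + ky)) := by
        rw [hc2coe]
        exact commutator_dicritic (by omega) hxd hc1d
      exact ⟨⁅x⁻¹, y⁻¹⁆, ⁅x⁻¹, (⁅x⁻¹, y⁻¹⁆ : G)⁻¹⁆, kx + ky, kx + (kx + ky),
        hc1mem, hc2mem, by omega, by omega, by omega, hc1d, hc2d⟩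
  obtain ⟨m, hm⟩ := hsolv.solvable
  obtain ⟨x, y, kx, ky, hx, _, _, _, _, hxd, _⟩ := key m
  rw [hm] at hx
  have hx1 : x = 1 := Subgroup.mem_bot.mp hx
  have : (x : FDiff n) = 1 := by rw [hx1]; rfl
  exact dicritic_ne_one hxd this


end FormalGroups
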